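/- Let L = σx⊗σx ∈ M₂(ℂ)⊗M₂(ℂ) and let D(ρ) = [Lρ, L] + [L, ρL] be the corresponding two-qubit dissipator. Then the kernel of D is exactly the complex linear span of the eight operators {σx⊗σx, σx⊗𝟙, 𝟙⊗σx, σy⊗σy, σz⊗σz, σy⊗σz, σz⊗σy, 𝟙⊗𝟙}. -/

import Mathlib

open Matrix Complex

noncomputable section

/-- Pauli matrices. -/
def σx : Matrix (Fin 2) (Fin 2) ℂ := !![0, 1; 1, 0]
def σy : Matrix (Fin 2) (Fin 2) ℂ := !![0, -Complex.I; Complex.I, 0]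
def σz : Matrix (Fin 2) (Fin 2) ℂ := !![1, 0; 0, -1]

/-- Operators on `r` qubits: the `r`-fold tensor power of `M₂(ℂ)`. -/
abbrev QOp (r : ℕ) := Matrix (Fin r → Fin 2) (Fin r → Fin 2) ℂ

/-- Operators on a ring of `n` qubits. -/
abbrev ROp (n : ℕ) := Matrix (ZMod n → Fin 2) (ZMod n → Fin 2) ℂ

/-- The Lindblad dissipator `D_L(ρ) = [Lρ, L†] + [L, ρL†]`. -/
def dissipator {I : Type*} [Fintype I] (L ρ : Matrix I I ℂ) : Matrix I I ℂ :=
  (L * ρ * Lᴴ - Lᴴ * (L * ρ)) + (L * (ρ * Lᴴ) - ρ * Lᴴ * L)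

/-- `𝓛` is a Lindblad generator: `𝓛(ρ) = i(ρH − Hρ) + Σ_k D_{L_k}(ρ)` for a Hermitian `H`
and a finite family of Lindblad operators. -/
def IsLindblad {I : Type*} [Fintype I] (𝓛 : Matrix I I ℂ → Matrix I I ℂ) : Prop :=
  ∃ H : Matrix I I ℂ, H.IsHermitian ∧ ∃ (m : ℕ) (Ls : Fin m → Matrix I I ℂ),
    ∀ ρ, 𝓛 ρ = Complex.I • (ρ * H - H * ρ) + ∑ k, dissipator (Ls k) ρ

/-- Tensor (Kronecker) product of two single-qubit operators, as a two-qubit operator. -/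
def kron2 (A B : Matrix (Fin 2) (Fin 2) ℂ) : QOp 2 :=
  Matrix.of fun x y => A (x 0) (y 0) * B (x 1) (y 1)

/-- Tensor product of `m` single-qubit operators. -/
def kronPow {m : ℕ} (f : Fin m → Matrix (Fin 2) (Fin 2) ℂ) : QOp m :=
  Matrix.of fun x y => ∏ i, f i (x i) (y i)

variable {n : ℕ}

/-- `b` acting on the `r` consecutive sites `j, j+1, …, j+r−1` (mod `n`) of the ring,
and as identity on all other sites. -/
def embWin [NeZero n] (r : ℕ) (j : ZMod n) (b : QOp r) : ROp n :=
  Matrix.of fun x y =>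
    (∏ s : ZMod n, if ∃ i : Fin r, s = j + (i.val : ZMod n) then (1 : ℂ)
      else if x s = y s then 1 else 0) *
    b (fun i => x (j + (i.val : ZMod n))) (fun i => y (j + (i.val : ZMod n)))

/-- Replace the values of a ring configuration on the window `j,…,j+r−1` by `u`. -/
def patch (r : ℕ) (j : ZMod n) (x : ZMod n → Fin 2) (u : Fin r → Fin 2) : ZMod n → Fin 2 :=
  fun s => if h : ∃ i : Fin r, s = j + (i.val : ZMod n) then u h.choose else x s

/-- The (linear) map `𝓛` on `r`-site operators, acting as `𝓛` on the tensor factors of the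
sites `j,…,j+r−1` of the ring and as the identity map on all other tensor factors. -/
def embMap [NeZero n] (r : ℕ) (j : ZMod n) (𝓛 : QOp r → QOp r) (M : ROp n) : ROp n :=
  Matrix.of fun x y =>
    (∏ s : ZMod n, if ∃ i : Fin r, s = j + (i.val : ZMod n) then (1 : ℂ)
      else if x s = y s then 1 else 0) *
    𝓛 (Matrix.of fun u u' => M (patch r j x u) (patch r j y u'))
      (fun i => x (j + (i.val : ZMod n))) (fun i => y (j + (i.val : ZMod n)))

/-- A single-qubit operator `b` acting on site `k` of the ring, identity elsewhere. -/
def embSite [NeZero n] (k : ZMod n) (b : Matrix (Fin 2) (Fin 2) ℂ) : ROp n :=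
  Matrix.of fun x y =>
    (∏ s : ZMod n, if s = k then (1 : ℂ) else if x s = y s then 1 else 0) * b (x k) (y k)

/-- A (linear) map `𝓛` on single-qubit operators acting on site `j` of the ring,
identity map on all other tensor factors. -/
def embMapSite [NeZero n] (j : ZMod n)
    (𝓛 : Matrix (Fin 2) (Fin 2) ℂ → Matrix (Fin 2) (Fin 2) ℂ) (M : ROp n) : ROp n :=
  Matrix.of fun x y =>
    (∏ s : ZMod n, if s = j then (1 : ℂ) else if x s = y s then 1 else 0) *
    𝓛 (Matrix.of fun u u' => M (Function.update x j u) (Function.update y j u')) (x j) (y j)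

open Kronecker

lemma sxx : σx * σx = 1 := by
  ext i j; fin_cases i <;> fin_cases j <;>
    simp [σx, Matrix.mul_apply, Fin.sum_univ_two, Matrix.one_apply]

lemma sxyx : σx * σy * σx = -σy := by
  ext i j; fin_cases i <;> fin_cases j <;>
    simp [σx, σy, Matrix.mul_apply, Fin.sum_univ_two]

lemma sxzx : σx * σz * σx = -σz := by
  ext i j; fin_cases i <;> fin_cases j <;>
    simp [σx, σz, Matrix.mul_apply, Fin.sum_univ_two]

lemma neg_kron_neg (A B : Matrix (Fin 2) (Fin 2) ℂ) : (-A) ⊗ₖ (-B) = A ⊗ₖ B := by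
  ext ⟨a,b⟩ ⟨c,d⟩; simp [Matrix.kroneckerMap_apply]


set_option maxHeartbeats 1000000 in
open Kronecker in
/-- the kernel of the two-qubit dissipator with Lindblad operator `σx⊗σx`
is exactly the span of the eight listed operators. -/
theorem stmt14 (L : Matrix (Fin 2 × Fin 2) (Fin 2 × Fin 2) ℂ) (hLdef : L = σx ⊗ₖ σx)
    (ρ : Matrix (Fin 2 × Fin 2) (Fin 2 × Fin 2) ℂ) :
    dissipator L ρ = 0 ↔ ρ ∈ Submodule.span ℂ
      ({σx ⊗ₖ σx,
        σx ⊗ₖ (1 : Matrix (Fin 2) (Fin 2) ℂ), (1 : Matrix (Fin 2) (Fin 2) ℂ) ⊗ₖ σx,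
        σy ⊗ₖ σy, σz ⊗ₖ σz, σy ⊗ₖ σz, σz ⊗ₖ σy,
        (1 : Matrix (Fin 2) (Fin 2) ℂ) ⊗ₖ (1 : Matrix (Fin 2) (Fin 2) ℂ)} :
        Set (Matrix (Fin 2 × Fin 2) (Fin 2 × Fin 2) ℂ)) := by
  have hLH : Lᴴ = L := by
    subst hLdef
    ext ⟨a,b⟩ ⟨c,d⟩
    fin_cases a <;> fin_cases b <;> fin_cases c <;> fin_cases d <;>
      simp [Matrix.conjTranspose_apply, Matrix.kroneckerMap_apply, σx]
  have hLL : L * L = 1 := by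
    rw [hLdef, ← Matrix.mul_kronecker_mul, sxx, Matrix.one_kronecker_one]
  have hDiss : dissipator L ρ = (L * ρ * L - ρ) + (L * ρ * L - ρ) := by
    unfold dissipator
    rw [hLH]
    have h1 : L * (L * ρ) = ρ := by rw [← mul_assoc, hLL, one_mul]
    have h2 : ρ * L * L = ρ := by rw [mul_assoc, hLL, mul_one]
    rw [h1, h2, ← mul_assoc]
  constructor
  · intro h0
    have hfix : L * ρ * L = ρ := by
      have h2' : (2:ℂ) • (L * ρ * L - ρ) = 0 := by
        rw [two_smul, ← hDiss, h0]
      have := (smul_eq_zero.mp h2').resolve_left (by norm_num)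
      exact sub_eq_zero.mp this
    have hmul : ∀ a b c d : Fin 2, (L * ρ * L) (a,b) (c,d) = ρ (1-a,1-b) (1-c,1-d) := by
      intro a b c d
      fin_cases a <;> fin_cases b <;> fin_cases c <;> fin_cases d <;>
        simp [hLdef, Matrix.mul_apply, Fintype.sum_prod_type, Fin.sum_univ_two,
          Matrix.kroneckerMap_apply, σx]
    have key : ∀ a b c d : Fin 2, ρ (1-a,1-b) (1-c,1-d) = ρ (a,b) (c,d) := by
      intro a b c d; rw [← hmul, hfix]
    have e1 : ρ (1,1) (1,1) = ρ (0,0) (0,0) := by simpa using key 0 0 0 0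
    have e2 : ρ (1,0) (1,0) = ρ (0,1) (0,1) := by simpa using key 0 1 0 1
    have e3 : ρ (1,1) (0,0) = ρ (0,0) (1,1) := by simpa using key 0 0 1 1
    have e4 : ρ (1,0) (0,1) = ρ (0,1) (1,0) := by simpa using key 0 1 1 0
    have e5 : ρ (1,1) (0,1) = ρ (0,0) (1,0) := by simpa using key 0 0 1 0
    have e6 : ρ (1,0) (0,0) = ρ (0,1) (1,1) := by simpa using key 0 1 1 1
    have e7 : ρ (1,1) (1,0) = ρ (0,0) (0,1) := by simpa using key 0 0 0 1
    have e8 : ρ (1,0) (1,1) = ρ (0,1) (0,0) := by simpa using key 0 1 0 0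
    have hdec : ρ =
        ((ρ (0,0) (1,1) + ρ (0,1) (1,0))/2) • (σx ⊗ₖ σx)
      + ((ρ (0,0) (1,0) + ρ (0,1) (1,1))/2) • (σx ⊗ₖ (1 : Matrix (Fin 2) (Fin 2) ℂ))
      + ((ρ (0,0) (0,1) + ρ (0,1) (0,0))/2) • ((1 : Matrix (Fin 2) (Fin 2) ℂ) ⊗ₖ σx)
      + ((ρ (0,1) (1,0) - ρ (0,0) (1,1))/2) • (σy ⊗ₖ σy)
      + ((ρ (0,0) (0,0) - ρ (0,1) (0,1))/2) • (σz ⊗ₖ σz)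
      + (Complex.I * (ρ (0,0) (1,0) - ρ (0,1) (1,1))/2) • (σy ⊗ₖ σz)
      + (Complex.I * (ρ (0,0) (0,1) - ρ (0,1) (0,0))/2) • (σz ⊗ₖ σy)
      + ((ρ (0,0) (0,0) + ρ (0,1) (0,1))/2) •
          ((1 : Matrix (Fin 2) (Fin 2) ℂ) ⊗ₖ (1 : Matrix (Fin 2) (Fin 2) ℂ)) := by
      ext ⟨a,b⟩ ⟨c,d⟩
      fin_cases a <;> fin_cases b <;> fin_cases c <;> fin_cases d <;>
        simp [Matrix.add_apply, Matrix.smul_apply, Matrix.kroneckerMap_apply,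
          Matrix.one_apply, σx, σy, σz, smul_eq_mul, Complex.I_sq, Prod.ext_iff] <;>
        first
          | linear_combination (norm := (ring_nf; (try simp [Complex.I_sq]); (try ring1); done))
          | linear_combination (norm := (ring_nf; (try simp [Complex.I_sq]); (try ring1); done)) e1
          | linear_combination (norm := (ring_nf; (try simp [Complex.I_sq]); (try ring1); done)) e2
          | linear_combination (norm := (ring_nf; (try simp [Complex.I_sq]); (try ring1); done)) e3
          | linear_combination (norm := (ring_nf; (try simp [Complex.I_sq]); (try ring1); done)) e4
          | linear_combination (norm := (ring_nf; (try simp [Complex.I_sq]); (try ring1); done)) e5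
          | linear_combination (norm := (ring_nf; (try simp [Complex.I_sq]); (try ring1); done)) e6
          | linear_combination (norm := (ring_nf; (try simp [Complex.I_sq]); (try ring1); done)) e7
          | linear_combination (norm := (ring_nf; (try simp [Complex.I_sq]); (try ring1); done)) e8
    rw [hdec]
    have m : ∀ x ∈ ({σx ⊗ₖ σx,
        σx ⊗ₖ (1 : Matrix (Fin 2) (Fin 2) ℂ), (1 : Matrix (Fin 2) (Fin 2) ℂ) ⊗ₖ σx,
        σy ⊗ₖ σy, σz ⊗ₖ σz, σy ⊗ₖ σz, σz ⊗ₖ σy,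
        (1 : Matrix (Fin 2) (Fin 2) ℂ) ⊗ₖ (1 : Matrix (Fin 2) (Fin 2) ℂ)} :
        Set (Matrix (Fin 2 × Fin 2) (Fin 2 × Fin 2) ℂ)), x ∈ Submodule.span ℂ
        ({σx ⊗ₖ σx,
        σx ⊗ₖ (1 : Matrix (Fin 2) (Fin 2) ℂ), (1 : Matrix (Fin 2) (Fin 2) ℂ) ⊗ₖ σx,
        σy ⊗ₖ σy, σz ⊗ₖ σz, σy ⊗ₖ σz, σz ⊗ₖ σy,
        (1 : Matrix (Fin 2) (Fin 2) ℂ) ⊗ₖ (1 : Matrix (Fin 2) (Fin 2) ℂ)} :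
        Set (Matrix (Fin 2 × Fin 2) (Fin 2 × Fin 2) ℂ)) :=
      fun x hx => Submodule.subset_span hx
    refine Submodule.add_mem _ (Submodule.add_mem _ (Submodule.add_mem _ (Submodule.add_mem _
      (Submodule.add_mem _ (Submodule.add_mem _ (Submodule.add_mem _
      (Submodule.smul_mem _ _ (m _ (by simp))) (Submodule.smul_mem _ _ (m _ (by simp))))
      (Submodule.smul_mem _ _ (m _ (by simp)))) (Submodule.smul_mem _ _ (m _ (by simp))))
      (Submodule.smul_mem _ _ (m _ (by simp)))) (Submodule.smul_mem _ _ (m _ (by simp))))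
      (Submodule.smul_mem _ _ (m _ (by simp)))) (Submodule.smul_mem _ _ (m _ (by simp)))
  · intro hmem
    have conj : ∀ A B : Matrix (Fin 2) (Fin 2) ℂ,
        L * (A ⊗ₖ B) * L = (σx * A * σx) ⊗ₖ (σx * B * σx) := by
      intro A B
      rw [hLdef, Matrix.mul_kronecker_mul, Matrix.mul_kronecker_mul]
    have c1 : σx * σx * σx = σx := by rw [sxx, one_mul]
    have c0 : σx * (1 : Matrix (Fin 2) (Fin 2) ℂ) * σx = 1 := by rw [mul_one, sxx]
    have hfix : L * ρ * L = ρ := by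
      let T : Matrix (Fin 2 × Fin 2) (Fin 2 × Fin 2) ℂ →ₗ[ℂ]
          Matrix (Fin 2 × Fin 2) (Fin 2 × Fin 2) ℂ :=
        { toFun := fun M => L * M * L - M
          map_add' := by intros; noncomm_ring
          map_smul' := by
            intros c M
            simp [Matrix.mul_smul, Matrix.smul_mul, smul_sub] }
      have hT : ρ ∈ LinearMap.ker T := by
        refine Submodule.span_le.mpr ?_ hmem
        intro g hg
        simp only [Set.mem_insert_iff, Set.mem_singleton_iff] at hg
        have goal0 : ∀ h : L * g * L = g, g ∈ LinearMap.ker T := fun h => by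
          simp only [LinearMap.mem_ker]
          show L * g * L - g = 0
          rw [h, sub_self]
        rcases hg with rfl|rfl|rfl|rfl|rfl|rfl|rfl|rfl
        · exact goal0 (by rw [conj, c1])
        · exact goal0 (by rw [conj, c1, c0])
        · exact goal0 (by rw [conj, c0, c1])
        · exact goal0 (by rw [conj, sxyx, neg_kron_neg])
        · exact goal0 (by rw [conj, sxzx, neg_kron_neg])
        · exact goal0 (by rw [conj, sxyx, sxzx, neg_kron_neg])
        · exact goal0 (by rw [conj, sxzx, sxyx, neg_kron_neg])
        · exact goal0 (by rw [conj, c0])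
      have h0' : L * ρ * L - ρ = 0 := LinearMap.mem_ker.mp hT
      exact sub_eq_zero.mp h0'
    rw [hDiss, hfix]
    simp
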